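/- Let A, B > 0 and let a, b be coprime positive integers with a odd. Then for every point q = (q_x, q_y) in the rectangle [−A, A] × [−B, B] there exists γ ∈ ℝ such that the Euclidean distance from q to the Lissajous point (A cos(aγ), B sin(bγ)) is at most max{ B sin(π/(2a)), A sin(π/(2b)) }. In particular, if each robot has sensing radius r_s > max{ B sin(π/(2a)), A sin(π/(2b)) }, then a robot sweeping the entire Lissajous curve covers the whole rectangle (complete coverage, Property 1, eq. (6) of the paper). -/

import Mathlib

open Real


lemma one_sub_cos_le_sin {t : ℝ} (h0 : 0 ≤ t) (h1 : t ≤ π / 2) :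
    1 - Real.cos t ≤ Real.sin t := by
  have hs : 0 ≤ Real.sin t := Real.sin_nonneg_of_nonneg_of_le_pi h0 (by linarith [Real.pi_pos])
  have hc : 0 ≤ Real.cos t := Real.cos_nonneg_of_mem_Icc ⟨by linarith [Real.pi_pos], h1⟩
  nlinarith [Real.sin_sq_add_cos_sq t, sq_nonneg (Real.sin t + Real.cos t - 1)]

set_option maxHeartbeats 1000000 in
lemma aux_above {h u σ : ℝ} (hh0 : 0 < h) (hhπ : h ≤ π)
    (h1 : u ≤ σ) (h2 : σ ≤ u + h)
    (hsu : Real.sin u ≤ Real.sin σ) (hsv : Real.sin (u + h) ≤ Real.sin σ) :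
    Real.sin σ - Real.sin u ≤ Real.sin (h / 2) ∨
      Real.sin σ - Real.sin (u + h) ≤ Real.sin (h / 2) := by
  by_contra hcon
  push_neg at hcon
  obtain ⟨hc1, hc2⟩ := hcon
  have hs : (0:ℝ) ≤ Real.sin (h / 2) :=
    Real.sin_nonneg_of_nonneg_of_le_pi (by linarith) (by linarith)
  have key1 := Real.sin_sub_sin σ u
  have key2 := Real.sin_sub_sin σ (u + h)
  have eC1 : (σ - (u + h)) / 2 = (σ - u - h) / 2 := by ring
  have eC2 : (σ + (u + h)) / 2 = (σ + u + h) / 2 := by ring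
  rw [eC1, eC2] at key2
  have idA := Real.cos_sub_cos (h / 2) (σ - u - h / 2)
  have eA1 : (h / 2 + (σ - u - h / 2)) / 2 = (σ - u) / 2 := by ring
  have eA2 : (h / 2 - (σ - u - h / 2)) / 2 = -((σ - u - h) / 2) := by ring
  rw [eA1, eA2, Real.sin_neg] at idA
  have hfae : Real.cos (h / 2) - Real.cos (σ - u - h / 2) =
      2 * Real.sin ((σ - u) / 2) * Real.sin ((σ - u - h) / 2) := by
    linear_combination idA
  have idB := Real.cos_add_cos (h / 2) (σ + u + h / 2)
  have eB1 : (h / 2 + (σ + u + h / 2)) / 2 = (σ + u + h) / 2 := by ring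
  have eB2 : (h / 2 - (σ + u + h / 2)) / 2 = -((σ + u) / 2) := by ring
  rw [eB1, eB2, Real.cos_neg] at idB
  have hp : 0 ≤ Real.sin ((σ - u) / 2) :=
    Real.sin_nonneg_of_nonneg_of_le_pi (by linarith) (by linarith [Real.pi_pos])
  have hp' : Real.sin ((σ - u - h) / 2) ≤ 0 := by
    have h0 : (0:ℝ) ≤ -((σ - u - h) / 2) := by linarith
    have hπ : -((σ - u - h) / 2) ≤ π := by linarith [Real.pi_pos]
    have := Real.sin_nonneg_of_nonneg_of_le_pi h0 hπ
    rw [Real.sin_neg] at this; linarith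
  have h1mc : 1 - Real.cos (h / 2) ≤ Real.sin (h / 2) :=
    one_sub_cos_le_sin (by linarith) (by linarith)
  have hb1 : Real.cos (σ - u - h / 2) ≤ 1 := Real.cos_le_one _
  have hb2 : -1 ≤ Real.cos (σ + u + h / 2) := Real.neg_one_le_cos _
  have hb3 : Real.cos (h / 2) ≤ 1 := Real.cos_le_one _
  have hprod : (Real.sin σ - Real.sin u) * (Real.sin σ - Real.sin (u + h)) =
      (Real.cos (h / 2) - Real.cos (σ - u - h / 2)) *
        (Real.cos (h / 2) + Real.cos (σ + u + h / 2)) := by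
    rw [key1, key2]
    linear_combination (-(Real.cos (h / 2) + Real.cos (σ + u + h / 2))) * hfae -
      (2 * Real.sin ((σ - u) / 2) * Real.sin ((σ - u - h) / 2)) * idB
  have hfa : Real.cos (h / 2) - Real.cos (σ - u - h / 2) ≤ 0 := by nlinarith [hfae, hp, hp']
  have hfb : Real.cos (h / 2) + Real.cos (σ + u + h / 2) ≤ 0 := by nlinarith [hprod, hc1, hc2, hs, hfa]
  have hkey : (Real.cos (h / 2) - Real.cos (σ - u - h / 2)) *
      (Real.cos (h / 2) + Real.cos (σ + u + h / 2)) ≤ (1 - Real.cos (h / 2)) ^ 2 := by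
    nlinarith [hfa, hfb, hb1, hb2]
  nlinarith [hprod, hc1, hc2, hs, h1mc, hkey]

lemma key_trig (n : ℕ) (hn : 0 < n) (φ σ : ℝ) :
    ∃ k : ℤ, |Real.sin (φ + (k : ℝ) * (π / n)) - Real.sin σ| ≤ Real.sin (π / (2 * n)) := by
  set h : ℝ := π / n with hh
  have hn' : (1:ℝ) ≤ n := by exact_mod_cast hn
  have hπ := Real.pi_pos
  have hh0 : 0 < h := by positivity
  have hhπ : h ≤ π := by
    rw [hh, div_le_iff₀ (by positivity)]
    nlinarith
  have hhalf : π / (2 * n) = h / 2 := by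
    rw [hh]; rw [div_div]; ring_nf
  rw [hhalf]
  have hs : (0:ℝ) ≤ Real.sin (h / 2) :=
    Real.sin_nonneg_of_nonneg_of_le_pi (by linarith) (by linarith)
  set k0 : ℤ := ⌊(σ - φ) / h⌋ with hk0
  set u : ℝ := φ + (k0 : ℝ) * h with hu
  have hu1 : u ≤ σ := by
    have := Int.floor_le ((σ - φ) / h)
    rw [hu]
    have : (k0 : ℝ) * h ≤ σ - φ := by
      rw [hk0]
      calc (⌊(σ - φ) / h⌋ : ℝ) * h ≤ ((σ - φ) / h) * h :=
            mul_le_mul_of_nonneg_right (Int.floor_le _) hh0.le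
        _ = σ - φ := by field_simp
    linarith
  have hu2 : σ ≤ u + h := by
    have h2 := Int.lt_floor_add_one ((σ - φ) / h)
    have : σ - φ < ((k0 : ℝ) + 1) * h := by
      rw [hk0]
      calc σ - φ = ((σ - φ) / h) * h := by field_simp
        _ < ((⌊(σ - φ) / h⌋ : ℝ) + 1) * h := by
            apply mul_lt_mul_of_pos_right _ hh0
            exact_mod_cast h2
    rw [hu]; linarith
  have huk : φ + ((k0 + 1 : ℤ) : ℝ) * h = u + h := by
    rw [hu]; push_cast; ring
  rcases le_total (Real.sin u) (Real.sin σ) with h1 | h1 <;>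
    rcases le_total (Real.sin (u + h)) (Real.sin σ) with h2 | h2
  · -- sin σ above both
    rcases aux_above hh0 hhπ hu1 hu2 h1 h2 with hc | hc
    · exact ⟨k0, by rw [show φ + (k0:ℝ) * h = u from hu.symm, abs_of_nonpos (by linarith)]; linarith⟩
    · refine ⟨k0 + 1, ?_⟩
      rw [huk, abs_of_nonpos (by linarith)]
      linarith
  · -- sin u ≤ sin σ ≤ sin (u + h) : between
    have hdiff := Real.sin_sub_sin (u + h) u
    have e1 : (u + h - u) / 2 = h / 2 := by ring
    rw [e1] at hdiff
    have hbd : Real.sin (u + h) - Real.sin u ≤ 2 * Real.sin (h / 2) := by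
      nlinarith [Real.cos_le_one ((u + h + u) / 2), Real.neg_one_le_cos ((u + h + u) / 2), hs]
    rcases le_total (Real.sin σ - Real.sin u) (Real.sin (u + h) - Real.sin σ) with hm | hm
    · exact ⟨k0, by rw [show φ + (k0:ℝ) * h = u from hu.symm, abs_of_nonpos (by linarith)]; linarith⟩
    · refine ⟨k0 + 1, ?_⟩
      rw [huk, abs_of_nonneg (by linarith)]
      linarith
  · -- sin (u+h) ≤ sin σ ≤ sin u : between (reverse)
    have hdiff := Real.sin_sub_sin u (u + h)
    have e1 : (u - (u + h)) / 2 = -(h / 2) := by ring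
    rw [e1, Real.sin_neg] at hdiff
    have hbd : Real.sin u - Real.sin (u + h) ≤ 2 * Real.sin (h / 2) := by
      nlinarith [Real.cos_le_one ((u + (u + h)) / 2), Real.neg_one_le_cos ((u + (u + h)) / 2), hs]
    rcases le_total (Real.sin u - Real.sin σ) (Real.sin σ - Real.sin (u + h)) with hm | hm
    · exact ⟨k0, by rw [show φ + (k0:ℝ) * h = u from hu.symm, abs_of_nonneg (by linarith)]; linarith⟩
    · refine ⟨k0 + 1, ?_⟩
      rw [huk, abs_of_nonpos (by linarith)]
      linarith
  · -- sin σ below both: shift by π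
    have hσπ : Real.sin u = -Real.sin (u + π) := by rw [Real.sin_add_pi]; ring
    have hσπ2 : Real.sin (u + h) = -Real.sin (u + h + π) := by rw [Real.sin_add_pi]; ring
    have hσπ3 : Real.sin σ = -Real.sin (σ + π) := by rw [Real.sin_add_pi]; ring
    have ha1 : Real.sin (u + π) ≤ Real.sin (σ + π) := by
      rw [Real.sin_add_pi, Real.sin_add_pi]; linarith
    have ha2 : Real.sin ((u + π) + h) ≤ Real.sin (σ + π) := by
      rw [show (u + π) + h = (u + h) + π by ring, Real.sin_add_pi, Real.sin_add_pi]; linarith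
    rcases aux_above hh0 hhπ (by linarith : u + π ≤ σ + π) (by linarith : σ + π ≤ (u + π) + h)
        ha1 ha2 with hc | hc
    · rw [Real.sin_add_pi, Real.sin_add_pi] at hc
      exact ⟨k0, by rw [show φ + (k0:ℝ) * h = u from hu.symm, abs_of_nonneg (by linarith)]; linarith⟩
    · rw [show (u + π) + h = (u + h) + π by ring, Real.sin_add_pi, Real.sin_add_pi] at hc
      refine ⟨k0 + 1, ?_⟩
      rw [huk, abs_of_nonneg (by linarith)]
      linarith

lemma exists_param (a b : ℕ) (ha : 0 < a) (hab : Nat.Coprime a b) (haodd : Odd a)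
    (c : ℝ) (k : ℤ) :
    ∃ γ : ℝ, Real.cos ((a : ℝ) * γ) = Real.cos c ∧
      Real.sin ((b : ℝ) * γ) = Real.sin ((b : ℝ) * c / a + (k : ℝ) * (π / a)) := by
  have hco : IsCoprime (a : ℤ) (b : ℤ) := Nat.isCoprime_iff_coprime.mpr hab
  obtain ⟨u, v, huv⟩ := hco
  have haR : (a : ℝ) ≠ 0 := by exact_mod_cast ha.ne'
  rcases Int.even_or_odd k with ⟨j, hj⟩ | ⟨j, hj⟩
  · -- k = j + j even
    set m : ℤ := j * v with hm
    set nn : ℤ := -(j * u) with hnn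
    have hbm : (b : ℤ) * m = j + a * nn := by
      rw [hm, hnn]; linear_combination j * huv
    refine ⟨(c + (m : ℝ) * (2 * π)) / a, ?_, ?_⟩
    · have : (a : ℝ) * ((c + (m : ℝ) * (2 * π)) / a) = c + (m : ℝ) * (2 * π) := by
        field_simp
      rw [this, Real.cos_add_int_mul_two_pi]
    · have hb' : (b : ℝ) * ((c + (m : ℝ) * (2 * π)) / a) =
          ((b : ℝ) * c / a + (k : ℝ) * (π / a)) + (nn : ℝ) * (2 * π) := by
        have hbmR : (b : ℝ) * (m : ℝ) = (j : ℝ) + (a : ℝ) * (nn : ℝ) := by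
          exact_mod_cast hbm
        field_simp
        subst hj
        push_cast
        linear_combination (2 * π) * hbmR
      rw [hb', Real.sin_add_int_mul_two_pi]
  · -- k = 2 j + 1 odd
    obtain ⟨w, hw⟩ := haodd
    set t : ℤ := (w : ℤ) - j with ht
    set m : ℤ := t * v with hm
    set nn : ℤ := -(t * u) with hnn
    have hbm : (b : ℤ) * m = t + a * nn := by
      rw [hm, hnn]; linear_combination t * huv
    refine ⟨(-c + (m : ℝ) * (2 * π)) / a, ?_, ?_⟩
    · have : (a : ℝ) * ((-c + (m : ℝ) * (2 * π)) / a) = -c + (m : ℝ) * (2 * π) := by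
        field_simp
      rw [this, Real.cos_add_int_mul_two_pi, Real.cos_neg]
    · have hb' : (b : ℝ) * ((-c + (m : ℝ) * (2 * π)) / a) =
          (π - ((b : ℝ) * c / a + (k : ℝ) * (π / a))) + (nn : ℝ) * (2 * π) := by
        have hbmR : (b : ℝ) * (m : ℝ) = (t : ℝ) + (a : ℝ) * (nn : ℝ) := by
          exact_mod_cast hbm
        have htR : (t : ℝ) = (w : ℝ) - (j : ℝ) := by rw [ht]; push_cast; ring
        have haw : (a : ℝ) = 2 * (w : ℝ) + 1 := by rw [hw]; push_cast; ring
        field_simp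
        subst hj
        push_cast [haw] at hbmR ⊢
        push_cast [htR] at hbmR
        linear_combination (2 * π) * hbmR
      rw [hb', Real.sin_add_int_mul_two_pi, Real.sin_pi_sub]

/-- Complete coverage: for coprime positive frequencies `a, b` with `a` odd,
every point of the rectangle `[−A, A] × [−B, B]` is within distance
`max (B sin(π/(2a))) (A sin(π/(2b)))` of some point of the Lissajous curve
`γ ↦ (A cos(aγ), B sin(bγ))`. Hence a robot with sensing radius exceeding
this bound sweeping the whole curve covers the whole rectangle. -/
theorem lissajous_complete_coverage
    (A B : ℝ) (hA : 0 < A) (hB : 0 < B)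
    (a b : ℕ) (ha : 0 < a) (hb : 0 < b)
    (hab : Nat.Coprime a b) (haodd : Odd a) :
    ∀ qx qy : ℝ, |qx| ≤ A → |qy| ≤ B →
      ∃ γ : ℝ,
        Real.sqrt ((qx - A * Real.cos (a * γ)) ^ 2 +
            (qy - B * Real.sin (b * γ)) ^ 2) ≤
          max (B * Real.sin (π / (2 * a))) (A * Real.sin (π / (2 * b))) := by
  intro qx qy hqx hqy
  obtain ⟨hqx1, hqx2⟩ := abs_le.mp hqx
  obtain ⟨hqy1, hqy2⟩ := abs_le.mp hqy
  have hx1 : -1 ≤ qx / A := by rw [le_div_iff₀ hA]; linarith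
  have hx2 : qx / A ≤ 1 := by rw [div_le_one hA]; linarith
  have hy1 : -1 ≤ qy / B := by rw [le_div_iff₀ hB]; linarith
  have hy2 : qy / B ≤ 1 := by rw [div_le_one hB]; linarith
  set c : ℝ := Real.arccos (qx / A) with hc
  have hcos : Real.cos c = qx / A := Real.cos_arccos hx1 hx2
  set σ : ℝ := Real.arcsin (qy / B) with hσ
  have hsin : Real.sin σ = qy / B := Real.sin_arcsin hy1 hy2
  obtain ⟨k, hk⟩ := key_trig a ha ((b : ℝ) * c / a) σ
  obtain ⟨γ, hγc, hγs⟩ := exists_param a b ha hab haodd c k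
  refine ⟨γ, ?_⟩
  have h1 : qx - A * Real.cos ((a : ℝ) * γ) = 0 := by
    rw [hγc, hcos]; field_simp; ring
  have h2 : |qy - B * Real.sin ((b : ℝ) * γ)| ≤ B * Real.sin (π / (2 * a)) := by
    rw [hγs]
    have : qy - B * Real.sin ((b : ℝ) * c / a + (k : ℝ) * (π / a)) =
        -(B * (Real.sin ((b : ℝ) * c / a + (k : ℝ) * (π / a)) - Real.sin σ)) := by
      rw [hsin]; field_simp; ring
    rw [this, abs_neg, abs_mul, abs_of_pos hB]
    exact mul_le_mul_of_nonneg_left hk hB.le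
  calc Real.sqrt ((qx - A * Real.cos (a * γ)) ^ 2 + (qy - B * Real.sin (b * γ)) ^ 2)
      = Real.sqrt ((qy - B * Real.sin (b * γ)) ^ 2) := by rw [h1]; ring_nf
    _ = |qy - B * Real.sin ((b : ℝ) * γ)| := Real.sqrt_sq_eq_abs _
    _ ≤ B * Real.sin (π / (2 * a)) := h2
    _ ≤ max (B * Real.sin (π / (2 * a))) (A * Real.sin (π / (2 * b))) := le_max_left _ _
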